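/- Let a be an odd positive integer and b an even positive integer, and let g be a permutation of a set of size ab that is a product of b disjoint cycles each of length a. Then the number of matchings on that set that commute with g equals b! · a^{b/2} / (2^{b/2} · (b/2)!). -/

import Mathlib

/-- A matching on a set is a fixed-point-free involution. -/
def IsMatching {X : Type*} (τ : Equiv.Perm X) : Prop :=
  τ * τ = 1 ∧ ∀ x, τ x ≠ x

/-- The number of matchings commuting with a given permutation. -/
noncomputable def matchingCount {X : Type*} (g : Equiv.Perm X) : ℕ :=
  Nat.card {τ : Equiv.Perm X // IsMatching τ ∧ Commute g τ}


open Equiv Equiv.Perm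
open scoped Nat

section Aux
variable {X : Type} {a : ℕ} {g : Equiv.Perm X}

/-- fixed points of all powers, zpow version -/
lemma zpow_fix (ha0 : 0 < a) (hper : ∀ (x : X) (n : ℕ), (g ^ n) x = x ↔ a ∣ n)
    (x : X) (m : ℤ) : (g ^ m) x = x ↔ (a : ℤ) ∣ m := by
  have hfixa : ∀ (w : X) (q : ℤ), (g ^ ((a : ℤ) * q)) w = w := by
    intro w q
    have h1 : (g ^ (a : ℕ)) w = w := (hper w a).2 dvd_rfl
    have h2 := Equiv.Perm.zpow_apply_eq_self_of_apply_eq_self h1 q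
    rwa [← zpow_natCast, ← zpow_mul] at h2
  constructor
  · intro h
    have hd : m = (a : ℤ) * (m / a) + m % a := (Int.mul_ediv_add_emod m a).symm
    have hr0 : 0 ≤ m % a := Int.emod_nonneg m (by exact_mod_cast ha0.ne')
    have hra : m % a < a := Int.emod_lt_of_pos m (by exact_mod_cast ha0)
    have : (g ^ m) x = (g ^ (m % a)) x := by
      conv_lhs => rw [hd]
      rw [zpow_add, Equiv.Perm.mul_apply, hfixa]
    rw [this] at h
    have : (g ^ (m % a).toNat) x = x := by
      rwa [← zpow_natCast, Int.toNat_of_nonneg hr0]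
    have hdvd := (hper x _).1 this
    have hdvd' : (a : ℤ) ∣ m % a := by
      have := Int.natCast_dvd_natCast.2 hdvd
      rwa [Int.toNat_of_nonneg hr0] at this
    obtain ⟨t, ht⟩ := hdvd'
    have hm0 : m % a = 0 := by
      rcases lt_trichotomy t 0 with h | h | h
      · nlinarith
      · simp [ht, h]
      · nlinarith
    exact ⟨m / a, by omega⟩
  · rintro ⟨q, rfl⟩
    exact hfixa x q

lemma zpow_eq_iff (ha0 : 0 < a) (hper : ∀ (x : X) (n : ℕ), (g ^ n) x = x ↔ a ∣ n)
    (x : X) (m l : ℤ) : (g ^ m) x = (g ^ l) x ↔ (a : ℤ) ∣ m - l := by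
  have h1 : (g ^ m) x = (g ^ (m - l)) ((g ^ l) x) := by
    rw [← Equiv.Perm.mul_apply, ← zpow_add]; ring_nf
  rw [h1]
  exact zpow_fix ha0 hper ((g ^ l) x) (m - l)

lemma orbit_card (ha0 : 0 < a) (hper : ∀ (x : X) (n : ℕ), (g ^ n) x = x ↔ a ∣ n)
    (x : X) : Nat.card {z : X // g.SameCycle x z} = a := by
  have hbij : Function.Bijective
      (fun k : Fin a => (⟨(g ^ (k : ℤ)) x, ⟨(k : ℤ), rfl⟩⟩ : {z : X // g.SameCycle x z})) := by
    constructor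
    · intro i j hij
      have h1 : (g ^ (i : ℤ)) x = (g ^ (j : ℤ)) x := congrArg Subtype.val hij
      have h2 := (zpow_eq_iff ha0 hper x _ _).1 h1
      obtain ⟨t, ht⟩ := h2
      have hi : (i : ℤ) < a := by exact_mod_cast i.2
      have hj : (j : ℤ) < a := by exact_mod_cast j.2
      have : (i : ℤ) = (j : ℤ) := by
        rcases lt_trichotomy t 0 with h | h | h
        · nlinarith [Int.natCast_nonneg (i : ℕ), Int.natCast_nonneg (j : ℕ)]
        · subst h; simp at ht; omega
        · nlinarith [Int.natCast_nonneg (i : ℕ), Int.natCast_nonneg (j : ℕ)]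
      exact Fin.ext (by exact_mod_cast this)
    · rintro ⟨z, i, hi⟩
      have hr0 : 0 ≤ i % a := Int.emod_nonneg i (by exact_mod_cast ha0.ne')
      have hra : i % a < a := Int.emod_lt_of_pos i (by exact_mod_cast ha0)
      refine ⟨⟨(i % a).toNat, by omega⟩, ?_⟩
      apply Subtype.ext
      have h3 : (g ^ (((i % a).toNat : ℕ) : ℤ)) x = (g ^ i) x := by
        rw [(zpow_eq_iff ha0 hper x _ _)]
        rw [Int.toNat_of_nonneg hr0]
        exact Dvd.intro (-(i / a)) (by rw [Int.emod_def]; ring)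
      show (g ^ (((i % a).toNat : ℕ) : ℤ)) x = z
      exact h3.trans hi
  calc Nat.card {z : X // g.SameCycle x z} = Nat.card (Fin a) :=
        (Nat.card_eq_of_bijective _ hbij).symm
    _ = a := by simp

lemma comm_zpow {τ : Equiv.Perm X} (hτc : Commute g τ) (m : ℤ) (w : X) :
    τ ((g ^ m) w) = (g ^ m) (τ w) := by
  have h := (hτc.zpow_left m).eq
  have := congrFun (congrArg (fun p : Equiv.Perm X => (p : X → X)) h) w
  simpa [Equiv.Perm.mul_apply] using this.symm

lemma matching_not_sameCycle (ha : Odd a) (ha0 : 0 < a)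
    (hper : ∀ (x : X) (n : ℕ), (g ^ n) x = x ↔ a ∣ n)
    {τ : Equiv.Perm X} (hτ : IsMatching τ) (hτc : Commute g τ) (x : X) :
    ¬ g.SameCycle x (τ x) := by
  rintro ⟨i, hi⟩
  have hττ : τ (τ x) = x := by
    have := congrFun (congrArg (fun p : Equiv.Perm X => (p : X → X)) hτ.1) x
    simpa [Equiv.Perm.mul_apply] using this
  have h2 : (g ^ (2 * i)) x = x := by
    have : τ (τ x) = (g ^ i) ((g ^ i) x) := by
      conv_lhs => rw [← hi]
      rw [comm_zpow hτc, hi]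
    rw [hττ] at this
    rw [two_mul, zpow_add, Equiv.Perm.mul_apply]
    exact this.symm
  have hdvd : (a : ℤ) ∣ 2 * i := (zpow_fix ha0 hper x _).1 h2
  have hcopn : Nat.Coprime a 2 := by
    have h2 : ¬ 2 ∣ a := by
      have := Nat.odd_iff.1 ha
      omega
    exact (Nat.Prime.coprime_iff_not_dvd Nat.prime_two).2 h2 |>.symm
  have hcop : IsCoprime (a : ℤ) 2 := by
    rw [Int.isCoprime_iff_gcd_eq_one]
    simpa [Int.gcd] using hcopn
  have hai : (a : ℤ) ∣ i := (hcop.dvd_of_dvd_mul_left hdvd)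
  have : (g ^ i) x = x := (zpow_fix ha0 hper x i).2 hai
  rw [this] at hi
  exact hτ.2 x hi.symm
end Aux

section Fiber
variable {X : Type} {a : ℕ} {g : Equiv.Perm X} {x₀ y : X}

lemma pred_invariant (hy : ¬ g.SameCycle x₀ y) :
    ∀ z, (¬ g.SameCycle x₀ (g z) ∧ ¬ g.SameCycle y (g z)) ↔
      (¬ g.SameCycle x₀ z ∧ ¬ g.SameCycle y z) := by
  intro z
  simp [Equiv.Perm.sameCycle_apply_right]

lemma fiber_card (ha : Odd a) (ha0 : 0 < a)
    (hper : ∀ (x : X) (n : ℕ), (g ^ n) x = x ↔ a ∣ n)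
    (hy : ¬ g.SameCycle x₀ y) :
    Nat.card {τ : Equiv.Perm X // (IsMatching τ ∧ Commute g τ) ∧ τ x₀ = y} =
      Nat.card {τ' : Equiv.Perm {z : X // ¬ g.SameCycle x₀ z ∧ ¬ g.SameCycle y z} //
        IsMatching τ' ∧ Commute (g.subtypePerm (pred_invariant hy)) τ'} := by
  classical
  set S := {z : X // ¬ g.SameCycle x₀ z ∧ ¬ g.SameCycle y z} with hS
  set g' : Equiv.Perm S := g.subtypePerm (pred_invariant hy) with hg'
  have hdisj : ∀ z : X, g.SameCycle x₀ z → g.SameCycle y z → False := fun z h1 h2 =>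
    hy (h1.trans h2.symm)
  -- any matching commuting with g fixing x₀ ↦ y preserves the complement S
  have pres : ∀ (τ : Equiv.Perm X), IsMatching τ → Commute g τ → τ x₀ = y →
      ∀ z, (¬ g.SameCycle x₀ (τ z) ∧ ¬ g.SameCycle y (τ z)) ↔
        (¬ g.SameCycle x₀ z ∧ ¬ g.SameCycle y z) := by
    intro τ hm hc hx z
    have hττ : ∀ w, τ (τ w) = w := fun w => by
      have := DFunLike.congr_fun hm.1 w
      simpa [Equiv.Perm.mul_apply] using this
    have hτy : τ y = x₀ := by rw [← hx, hττ]
    have h1 : g.SameCycle x₀ (τ z) ↔ g.SameCycle y z := by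
      constructor
      · rintro ⟨i, hi⟩
        exact ⟨i, by rw [← hx, ← comm_zpow hc, hi, hττ]⟩
      · rintro ⟨i, hi⟩
        exact ⟨i, by rw [← hi, comm_zpow hc, hτy]⟩
    have h2 : g.SameCycle y (τ z) ↔ g.SameCycle x₀ z := by
      constructor
      · rintro ⟨i, hi⟩
        exact ⟨i, by rw [← hτy, ← comm_zpow hc, hi, hττ]⟩
      · rintro ⟨i, hi⟩
        exact ⟨i, by rw [← hi, comm_zpow hc, hx]⟩
    rw [h1, h2, and_comm]
  have mkprops : ∀ (τ : Equiv.Perm X) (hm : IsMatching τ) (hc : Commute g τ) (hx : τ x₀ = y),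
      IsMatching (τ.subtypePerm (p := fun z => ¬ g.SameCycle x₀ z ∧ ¬ g.SameCycle y z) (pres τ hm hc hx)) ∧
        Commute g' (τ.subtypePerm (pres τ hm hc hx)) := by
    intro τ hm hc hx
    have hττ : ∀ w, τ (τ w) = w := fun w => by
      have := DFunLike.congr_fun hm.1 w
      simpa [Equiv.Perm.mul_apply] using this
    refine ⟨⟨?_, ?_⟩, ?_⟩
    · ext w
      exact hττ w.1
    · rintro ⟨z, hz⟩ h
      exact hm.2 z (congrArg Subtype.val h)
    · refine Equiv.ext fun w => ?_
      apply Subtype.ext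
      have := DFunLike.congr_fun hc.eq w.1
      exact this
  let Φ : {τ : Equiv.Perm X // (IsMatching τ ∧ Commute g τ) ∧ τ x₀ = y} →
      {τ' : Equiv.Perm S // IsMatching τ' ∧ Commute g' τ'} := fun t =>
    ⟨t.1.subtypePerm (pres t.1 t.2.1.1 t.2.1.2 t.2.2),
      mkprops t.1 t.2.1.1 t.2.1.2 t.2.2⟩
  have hinj : Function.Injective Φ := by
    rintro ⟨τ₁, ⟨hm₁, hc₁⟩, hx₁⟩ ⟨τ₂, ⟨hm₂, hc₂⟩, hx₂⟩ h
    have hval : τ₁.subtypePerm (pres τ₁ hm₁ hc₁ hx₁) = τ₂.subtypePerm (pres τ₂ hm₂ hc₂ hx₂) :=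
      congrArg Subtype.val h
    have hττ₁ : ∀ w, τ₁ (τ₁ w) = w := fun w => by
      have := DFunLike.congr_fun hm₁.1 w
      simpa [Equiv.Perm.mul_apply] using this
    have hττ₂ : ∀ w, τ₂ (τ₂ w) = w := fun w => by
      have := DFunLike.congr_fun hm₂.1 w
      simpa [Equiv.Perm.mul_apply] using this
    have hτy₁ : τ₁ y = x₀ := by rw [← hx₁, hττ₁]
    have hτy₂ : τ₂ y = x₀ := by rw [← hx₂, hττ₂]
    apply Subtype.ext
    ext z
    by_cases h1 : g.SameCycle x₀ z
    · obtain ⟨i, hi⟩ := h1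
      rw [← hi, comm_zpow hc₁, comm_zpow hc₂, hx₁, hx₂]
    · by_cases h2 : g.SameCycle y z
      · obtain ⟨i, hi⟩ := h2
        rw [← hi, comm_zpow hc₁, comm_zpow hc₂, hτy₁, hτy₂]
      · have := DFunLike.congr_fun hval (⟨z, h1, h2⟩ : S)
        exact congrArg Subtype.val this
  have hsurj : Function.Surjective Φ := by
    rintro ⟨τ', hm', hc'⟩
    have hττ' : ∀ w, τ' (τ' w) = w := fun w => by
      have := DFunLike.congr_fun hm'.1 w
      simpa [Equiv.Perm.mul_apply] using this
    set f : X → X := fun z =>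
      if h1 : g.SameCycle x₀ z then (g ^ h1.choose) y
      else if h2 : g.SameCycle y z then (g ^ h2.choose) x₀
      else (τ' ⟨z, h1, h2⟩ : X) with hf
    have r1 : ∀ (z : X) (h1 : g.SameCycle x₀ z) (i : ℤ), (g ^ i) x₀ = z → f z = (g ^ i) y := by
      intro z h1 i hi
      have hv : f z = (g ^ h1.choose) y := by simp only [hf]; rw [dif_pos h1]
      rw [hv, zpow_eq_iff ha0 hper]
      exact (zpow_eq_iff ha0 hper x₀ _ _).1 (by rw [h1.choose_spec, hi])
    have r2 : ∀ (z : X) (h1 : ¬ g.SameCycle x₀ z) (h2 : g.SameCycle y z) (i : ℤ),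
        (g ^ i) y = z → f z = (g ^ i) x₀ := by
      intro z h1 h2 i hi
      have hv : f z = (g ^ h2.choose) x₀ := by
        simp only [hf]; rw [dif_neg h1, dif_pos h2]
      rw [hv, zpow_eq_iff ha0 hper]
      exact (zpow_eq_iff ha0 hper y _ _).1 (by rw [h2.choose_spec, hi])
    have r3 : ∀ (z : X) (h1 : ¬ g.SameCycle x₀ z) (h2 : ¬ g.SameCycle y z),
        f z = (τ' ⟨z, h1, h2⟩ : X) := by
      intro z h1 h2
      simp only [hf]; rw [dif_neg h1, dif_neg h2]
    have hinvol : Function.Involutive f := by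
      intro z
      by_cases h1 : g.SameCycle x₀ z
      · have hfz : f z = (g ^ h1.choose) y := r1 z h1 _ h1.choose_spec
        have hSCy : g.SameCycle y (f z) := ⟨h1.choose, hfz.symm⟩
        have hnot : ¬ g.SameCycle x₀ (f z) := fun hcon => hdisj _ hcon hSCy
        rw [r2 (f z) hnot hSCy h1.choose hfz.symm]
        exact h1.choose_spec
      · by_cases h2 : g.SameCycle y z
        · have hfz : f z = (g ^ h2.choose) x₀ := r2 z h1 h2 _ h2.choose_spec
          have hSCx : g.SameCycle x₀ (f z) := ⟨h2.choose, hfz.symm⟩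
          rw [r1 (f z) hSCx h2.choose hfz.symm]
          exact h2.choose_spec
        · have hfz : f z = (τ' ⟨z, h1, h2⟩ : X) := r3 z h1 h2
          have hmem := (τ' ⟨z, h1, h2⟩).2
          rw [hfz, r3 _ hmem.1 hmem.2]
          have he : (⟨(τ' ⟨z, h1, h2⟩ : X), hmem.1, hmem.2⟩ : S) = τ' ⟨z, h1, h2⟩ :=
            Subtype.ext rfl
          rw [he, hττ']
    set τ : Equiv.Perm X := Function.Involutive.toPerm f hinvol with hτ
    have hτapp : ∀ z, τ z = f z := fun z => rfl
    have hτm : IsMatching τ := by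
      constructor
      · ext z
        simpa [Equiv.Perm.mul_apply, hτapp] using hinvol z
      · intro z heq
        rw [hτapp] at heq
        by_cases h1 : g.SameCycle x₀ z
        · have hfz : f z = (g ^ h1.choose) y := r1 z h1 _ h1.choose_spec
          have hSCy : g.SameCycle y z := ⟨h1.choose, by rw [← hfz]; exact heq⟩
          exact hdisj z h1 hSCy
        · by_cases h2 : g.SameCycle y z
          · have hfz : f z = (g ^ h2.choose) x₀ := r2 z h1 h2 _ h2.choose_spec
            exact h1 ⟨h2.choose, by rw [← hfz]; exact heq⟩
          · have hfz : f z = (τ' ⟨z, h1, h2⟩ : X) := r3 z h1 h2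
            rw [hfz] at heq
            exact hm'.2 ⟨z, h1, h2⟩ (Subtype.ext heq)
    have hτc : Commute g τ := by
      refine Equiv.ext fun z => ?_
      show g (τ z) = τ (g z)
      rw [hτapp, hτapp]
      by_cases h1 : g.SameCycle x₀ z
      · have hc1 : (g ^ h1.choose) x₀ = z := h1.choose_spec
        have hgc : (g ^ (1 + h1.choose)) x₀ = g z := by
          rw [zpow_add, zpow_one, Equiv.Perm.mul_apply, hc1]
        rw [r1 z h1 _ hc1, r1 (g z) ⟨1 + h1.choose, hgc⟩ (1 + h1.choose) hgc,
          zpow_add, zpow_one, Equiv.Perm.mul_apply]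
      · have h1' : ¬ g.SameCycle x₀ (g z) := fun hcon =>
          h1 (Equiv.Perm.sameCycle_apply_right.1 hcon)
        by_cases h2 : g.SameCycle y z
        · have hc2 : (g ^ h2.choose) y = z := h2.choose_spec
          have hgc : (g ^ (1 + h2.choose)) y = g z := by
            rw [zpow_add, zpow_one, Equiv.Perm.mul_apply, hc2]
          rw [r2 z h1 h2 _ hc2, r2 (g z) h1' ⟨1 + h2.choose, hgc⟩ (1 + h2.choose) hgc,
            zpow_add, zpow_one, Equiv.Perm.mul_apply]
        · have h2' : ¬ g.SameCycle y (g z) := fun hcon =>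
            h2 (Equiv.Perm.sameCycle_apply_right.1 hcon)
          rw [r3 z h1 h2, r3 (g z) h1' h2']
          have he : (⟨g z, h1', h2'⟩ : S) = g' ⟨z, h1, h2⟩ := Subtype.ext rfl
          rw [he]
          have hpt := DFunLike.congr_fun hc'.eq (⟨z, h1, h2⟩ : S)
          have hpt' : g' (τ' ⟨z, h1, h2⟩) = τ' (g' ⟨z, h1, h2⟩) := by
            simpa [Equiv.Perm.mul_apply] using hpt
          exact congrArg Subtype.val hpt'
    have hτx : τ x₀ = y := by
      have h0 : (g ^ (0 : ℤ)) x₀ = x₀ := by simp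
      have := r1 x₀ ⟨0, h0⟩ 0 h0
      rw [hτapp]
      simpa using this
    refine ⟨⟨τ, ⟨hτm, hτc⟩, hτx⟩, ?_⟩
    apply Subtype.ext
    refine Equiv.ext fun w => ?_
    apply Subtype.ext
    show τ w.1 = (τ' w : X)
    obtain ⟨z, h1, h2⟩ := w
    rw [hτapp]
    exact r3 z h1 h2
  exact Nat.card_eq_of_bijective Φ ⟨hinj, hsurj⟩
end Fiber

lemma count_key (a : ℕ) (ha : Odd a) (ha0 : 0 < a) :
    ∀ (k : ℕ) (X : Type) [Fintype X] [DecidableEq X] (g : Equiv.Perm X),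
      Fintype.card X = a * (2 * k) →
      (∀ (x : X) (n : ℕ), (g ^ n) x = x ↔ a ∣ n) →
      matchingCount g = (2 * k - 1)‼ * a ^ k := by
  intro k
  induction k with
  | zero =>
    intro X _ _ g hcard hper
    simp only [mul_zero] at hcard
    have hE : IsEmpty X := Fintype.card_eq_zero_iff.1 hcard
    have hsub : Subsingleton (Equiv.Perm X) := by
      constructor; intro p q; ext x; exact (hE.false x).elim
    have hne : Nonempty {τ : Equiv.Perm X // IsMatching τ ∧ Commute g τ} :=
      ⟨⟨1, ⟨one_mul 1, fun x => (hE.false x).elim⟩, Commute.one_right g⟩⟩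
    have hsub' : Subsingleton {τ : Equiv.Perm X // IsMatching τ ∧ Commute g τ} :=
      ⟨fun p q => Subtype.ext (Subsingleton.elim _ _)⟩
    unfold matchingCount
    rw [Nat.card_eq_one_iff_unique.2 ⟨hsub', hne⟩]
    simp [Nat.doubleFactorial]
  | succ k ih =>
    intro X _ _ g hcard hper
    classical
    have hpos : 0 < Fintype.card X := by rw [hcard]; positivity
    obtain ⟨x₀⟩ := Fintype.card_pos_iff.1 hpos
    unfold matchingCount
    rw [Nat.card_eq_fintype_card, Fintype.card_subtype]
    set t : Finset X := Finset.univ.filter (fun z => ¬ g.SameCycle x₀ z) with ht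
    have hmem : ∀ τ ∈ Finset.univ.filter (fun τ => IsMatching τ ∧ Commute g τ), τ x₀ ∈ t := by
      intro τ hτ
      simp only [Finset.mem_filter, Finset.mem_univ, true_and, ht] at hτ ⊢
      exact matching_not_sameCycle ha ha0 hper hτ.1 hτ.2 x₀
    rw [Finset.card_eq_sum_card_fiberwise hmem]
    have horb : ∀ w : X, Fintype.card {z : X // g.SameCycle w z} = a := by
      intro w
      rw [← Nat.card_eq_fintype_card]
      exact orbit_card ha0 hper w
    have hfiber : ∀ y ∈ t,
        ((Finset.univ.filter (fun τ => IsMatching τ ∧ Commute g τ)).filter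
          (fun τ => τ x₀ = y)).card = (2 * k - 1)‼ * a ^ k := by
      intro y hyt
      have hy : ¬ g.SameCycle x₀ y := by simpa [ht] using hyt
      have h1 : ((Finset.univ.filter (fun τ => IsMatching τ ∧ Commute g τ)).filter
          (fun τ => τ x₀ = y)).card
          = Nat.card {τ : Equiv.Perm X // (IsMatching τ ∧ Commute g τ) ∧ τ x₀ = y} := by
        rw [Nat.card_eq_fintype_card, Fintype.card_subtype, Finset.filter_filter]
      rw [h1, fiber_card ha ha0 hper hy]
      set g' := g.subtypePerm (p := fun z => ¬ g.SameCycle x₀ z ∧ ¬ g.SameCycle y z) (pred_invariant hy) with hg'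
      have hper' : ∀ (z : {z : X // ¬ g.SameCycle x₀ z ∧ ¬ g.SameCycle y z}) (n : ℕ),
          (g' ^ n) z = z ↔ a ∣ n := by
        intro z n
        rw [hg', Equiv.Perm.subtypePerm_pow]
        constructor
        · intro h
          exact (hper z.1 n).1 (congrArg Subtype.val h)
        · intro h
          apply Subtype.ext
          simpa [Equiv.Perm.subtypePerm_apply] using (hper z.1 n).2 h
      have hcard' : Fintype.card {z : X // ¬ g.SameCycle x₀ z ∧ ¬ g.SameCycle y z}
          = a * (2 * k) := by
        have e1 : Fintype.card {z : X // ¬ g.SameCycle x₀ z ∧ ¬ g.SameCycle y z}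
            = Fintype.card {z : X // ¬ (g.SameCycle x₀ z ∨ g.SameCycle y z)} :=
          Fintype.card_congr (Equiv.subtypeEquivRight (by tauto))
        have hdisj : Disjoint (g.SameCycle x₀ ·) (g.SameCycle y ·) := by
          rw [Pi.disjoint_iff]
          intro z
          by_cases h1 : g.SameCycle x₀ z
          · by_cases h2 : g.SameCycle y z
            · exact absurd (h1.trans h2.symm) hy
            · simp [h2, disjoint_iff]
          · simp [h1, disjoint_iff]
        have e2 : Fintype.card {z : X // g.SameCycle x₀ z ∨ g.SameCycle y z} = a + a := by
          rw [Fintype.card_subtype_or_disjoint _ _ hdisj, horb x₀, horb y]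
        rw [e1, Fintype.card_subtype_compl, e2, hcard]
        have hr : a * (2 * (k + 1)) = a * (2 * k) + (a + a) := by ring
        omega
      have := ih {z : X // ¬ g.SameCycle x₀ z ∧ ¬ g.SameCycle y z} g' hcard' hper'
      unfold matchingCount at this
      exact this
    rw [Finset.sum_congr rfl hfiber, Finset.sum_const, smul_eq_mul]
    have htcard : t.card = a * (2 * k + 1) := by
      have e1 : t.card = Fintype.card {z : X // ¬ g.SameCycle x₀ z} := by
        rw [Fintype.card_subtype]
      rw [e1, Fintype.card_subtype_compl, horb x₀, hcard]
      have hr : a * (2 * (k + 1)) = a * (2 * k + 1) + a := by ring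
      omega
    rw [htcard]
    have hdf : (2 * (k + 1) - 1)‼ = (2 * k + 1) * (2 * k - 1)‼ := by
      have h2 : 2 * (k + 1) - 1 = 2 * k + 1 := by omega
      rw [h2]
      exact Nat.doubleFactorial_add_one (2 * k)
    rw [hdf]
    ring

lemma factorial_double (k : ℕ) : (2 * k).factorial = 2 ^ k * k.factorial * (2 * k - 1)‼ := by
  cases k with
  | zero => rfl
  | succ m =>
    have h1 : 2 * (m + 1) = (2 * m + 1) + 1 := by ring
    rw [h1, Nat.factorial_eq_mul_doubleFactorial]
    rw [show (2 * m + 1) + 1 = 2 * (m + 1) by ring, Nat.doubleFactorial_two_mul]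
    rw [show 2 * (m + 1) - 1 = 2 * m + 1 by omega]



/-- Let `a` be odd positive, `b` even positive, and let `g` be a
permutation of a set of size `a*b` that is the product of `b` disjoint cycles each
of length `a`. Then the number of matchings commuting with `g` is
`b! a^{b/2} / (2^{b/2} (b/2)!)`. -/
theorem stmt3 (a b : ℕ) (ha : Odd a) (ha0 : 0 < a) (hb : Even b) (hb0 : 0 < b)
    (g : Equiv.Perm (Fin (a * b)))
    (hg : g.partition.parts = Multiset.replicate b a) :
    (matchingCount g : ℚ) =
      (b.factorial * a ^ (b / 2) : ℚ) / (2 ^ (b / 2) * (b / 2).factorial) := by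
  classical
  obtain ⟨k, hk⟩ := hb
  have hb2 : b = 2 * k := by omega
  have hper : ∀ (x : Fin (a * b)) (n : ℕ), (g ^ n) x = x ↔ a ∣ n := by
    by_cases hA : a = 1
    · have hct : g.cycleType = 0 := by
        rw [← Equiv.Perm.filter_parts_partition_eq_cycleType, hg, hA]
        exact Multiset.filter_eq_nil.2 fun n hn => by
          rw [Multiset.eq_of_mem_replicate hn]; omega
      have hg1 : g = 1 := Equiv.Perm.cycleType_eq_zero.1 hct
      intro x n
      simp [hg1, hA]
    · have hA2 : 2 ≤ a := by omega
      have hct : g.cycleType = Multiset.replicate b a := by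
        rw [← Equiv.Perm.filter_parts_partition_eq_cycleType, hg]
        rw [Multiset.filter_eq_self.2]
        intro n hn
        rw [Multiset.eq_of_mem_replicate hn]
        exact hA2
      have hsupp : g.support = Finset.univ := by
        apply Finset.eq_univ_of_card
        rw [← Equiv.Perm.sum_cycleType, hct, Multiset.sum_replicate, smul_eq_mul,
          Fintype.card_fin]
        ring
      intro x n
      have hx : x ∈ g.support := hsupp ▸ Finset.mem_univ x
      have hgx : g x ≠ x := Equiv.Perm.mem_support.1 hx
      have hcyc : (g.cycleOf x).IsCycle := Equiv.Perm.isCycle_cycleOf g hgx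
      have hmem : g.cycleOf x ∈ g.cycleFactorsFinset :=
        Equiv.Perm.cycleOf_mem_cycleFactorsFinset_iff.2 hx
      have hcardc : (g.cycleOf x).support.card = a := by
        have hmm : (g.cycleOf x).support.card ∈ g.cycleType := by
          rw [Equiv.Perm.cycleType_def]
          exact Multiset.mem_map_of_mem _ hmem
        rw [hct] at hmm
        exact Multiset.eq_of_mem_replicate hmm
      have horder : orderOf (g.cycleOf x) = a := by rw [hcyc.orderOf, hcardc]
      constructor
      · intro h
        have hc : ((g.cycleOf x) ^ n) x = x := by
          rw [Equiv.Perm.cycleOf_pow_apply_self]; exact h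
        have hcx : (g.cycleOf x) x ≠ x := by
          rw [Equiv.Perm.cycleOf_apply_self]; exact hgx
        have h1 : (g.cycleOf x) ^ n = 1 := hcyc.pow_eq_one_iff.2 ⟨x, hcx, hc⟩
        rw [← horder]
        exact orderOf_dvd_of_pow_eq_one h1
      · intro h
        have h1 : (g.cycleOf x) ^ n = 1 := by
          rw [← horder] at h
          exact orderOf_dvd_iff_pow_eq_one.1 h
        have h2 := DFunLike.congr_fun h1 x
        rw [Equiv.Perm.cycleOf_pow_apply_self] at h2
        simpa using h2
  have hcard : Fintype.card (Fin (a * b)) = a * (2 * k) := by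
    rw [Fintype.card_fin, hb2]
  have hcount := count_key a ha ha0 k (Fin (a * b)) g hcard hper
  have hk2 : b / 2 = k := by omega
  rw [hcount, hk2]
  have hne : (2 ^ k * k.factorial : ℚ) ≠ 0 := by positivity
  rw [eq_div_iff hne]
  have hfact := factorial_double k
  rw [hb2]
  push_cast [hfact]
  ring
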